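/- Let d ≥ 1, let A be a d×d real matrix with nonnegative entries, and suppose there are constants C, M ≥ 1 and α ∈ (0, 1) with A_{ij} ≤ C α^{j−i} for all 1 ≤ i ≤ j ≤ d and A_{ij} ≤ M for all 1 ≤ i, j ≤ d. Let β ∈ (α, 1) and let x ∈ ℝ^d have nonnegative entries. Then ∑_{i=1}^d β^i (A x)_i ≤ (C/(1 − α/β) + M β/(1 − β)) · ∑_{j=1}^d β^j x_j. -/

import Mathlib

open Matrix Finset

private lemma geom_aux (r : ℝ) (h0 : 0 ≤ r) (h1 : r < 1) (n : ℕ) :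
    ∑ k ∈ Finset.range n, r ^ k ≤ 1 / (1 - r) := by
  have hr : r ≠ 1 := ne_of_lt h1
  rw [geom_sum_eq hr,
    show (r ^ n - 1) / (r - 1) = (1 - r ^ n) / (1 - r) by
      rw [← neg_sub (r ^ n), ← neg_sub r, neg_div_neg_eq]]
  have h1r : 0 < 1 - r := by linarith
  have hrn : 0 ≤ r ^ n := pow_nonneg h0 n
  apply div_le_div_of_nonneg_right ?_ ?_ |>.trans_eq rfl <;> linarith

theorem stmt10 (d : ℕ) (hd : 1 ≤ d) (A : Matrix (Fin d) (Fin d) ℝ)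
    (C M α β : ℝ) (hC : 1 ≤ C) (hM : 1 ≤ M)
    (hα0 : 0 < α) (hα1 : α < 1) (hαβ : α < β) (hβ1 : β < 1)
    (hnn : ∀ i j, 0 ≤ A i j)
    (hgeo : ∀ i j : Fin d, (i : ℕ) ≤ (j : ℕ) → A i j ≤ C * α ^ ((j : ℕ) - (i : ℕ)))
    (hbdd : ∀ i j, A i j ≤ M)
    (x : Fin d → ℝ) (hx : ∀ i, 0 ≤ x i) :
    ∑ i : Fin d, β ^ ((i : ℕ) + 1) * (A *ᵥ x) i ≤
      (C / (1 - α / β) + M * β / (1 - β)) * ∑ j : Fin d, β ^ ((j : ℕ) + 1) * x j := by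
  have hβ0 : 0 < β := hα0.trans hαβ
  have hr0 : 0 ≤ α / β := le_of_lt (div_pos hα0 hβ0)
  have hr1 : α / β < 1 := (div_lt_one hβ0).mpr hαβ
  set K : ℝ := C / (1 - α / β) + M * β / (1 - β) with hK
  have key : ∀ j : Fin d, ∑ i : Fin d, β ^ ((i : ℕ) + 1) * A i j ≤ K * β ^ ((j : ℕ) + 1) := by
    intro j
    have hjd : (j : ℕ) + 1 ≤ d := j.isLt
    set f : ℕ → ℝ := fun i => if h : i < d then β ^ (i + 1) * A ⟨i, h⟩ j else 0 with hf
    have hsum : ∑ i : Fin d, β ^ ((i : ℕ) + 1) * A i j = ∑ i ∈ range d, f i := by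
      rw [← Fin.sum_univ_eq_sum_range f d]
      exact sum_congr rfl fun i _ => by simp [hf, i.isLt]
    rw [hsum, ← Finset.sum_range_add_sum_Ico f hjd]
    have part1 : ∑ i ∈ range ((j : ℕ) + 1), f i ≤ C / (1 - α / β) * β ^ ((j : ℕ) + 1) := by
      have step : ∀ i ∈ range ((j : ℕ) + 1),
          f i ≤ C * β ^ ((j : ℕ) + 1) * (α / β) ^ ((j : ℕ) - i) := by
        intro i hi
        rw [mem_range] at hi
        have hid : i < d := lt_of_lt_of_le hi hjd
        have hij : i ≤ (j : ℕ) := Nat.lt_succ_iff.mp hi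
        have hA : A ⟨i, hid⟩ j ≤ C * α ^ ((j : ℕ) - i) := hgeo ⟨i, hid⟩ j hij
        have hpow : β ^ ((j : ℕ) + 1) * (α / β) ^ ((j : ℕ) - i) = β ^ (i + 1) * α ^ ((j : ℕ) - i) := by
          have hsplit : (j : ℕ) + 1 = ((j : ℕ) - i) + (i + 1) := by omega
          rw [hsplit, pow_add, div_pow]
          field_simp
        have hβpow : 0 ≤ β ^ (i + 1) := le_of_lt (pow_pos hβ0 _)
        calc f i = β ^ (i + 1) * A ⟨i, hid⟩ j := by simp [hf, hid]
          _ ≤ β ^ (i + 1) * (C * α ^ ((j : ℕ) - i)) := mul_le_mul_of_nonneg_left hA hβpow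
          _ = C * (β ^ (i + 1) * α ^ ((j : ℕ) - i)) := by ring
          _ = C * β ^ ((j : ℕ) + 1) * (α / β) ^ ((j : ℕ) - i) := by rw [← hpow]; ring
      calc ∑ i ∈ range ((j : ℕ) + 1), f i
          ≤ ∑ i ∈ range ((j : ℕ) + 1), C * β ^ ((j : ℕ) + 1) * (α / β) ^ ((j : ℕ) - i) :=
            sum_le_sum step
        _ = C * β ^ ((j : ℕ) + 1) * ∑ i ∈ range ((j : ℕ) + 1), (α / β) ^ ((j : ℕ) - i) := by
            rw [mul_sum]
        _ = C * β ^ ((j : ℕ) + 1) * ∑ k ∈ range ((j : ℕ) + 1), (α / β) ^ k := by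
            congr 1
            rw [← Finset.sum_range_reflect (fun k => (α / β) ^ k) ((j : ℕ) + 1)]
            exact sum_congr rfl fun i hi => by simp
        _ ≤ C * β ^ ((j : ℕ) + 1) * (1 / (1 - α / β)) := by
            apply mul_le_mul_of_nonneg_left (geom_aux _ hr0 hr1 _)
            positivity
        _ = C / (1 - α / β) * β ^ ((j : ℕ) + 1) := by ring
    have part2 : ∑ i ∈ Ico ((j : ℕ) + 1) d, f i ≤ M * β / (1 - β) * β ^ ((j : ℕ) + 1) := by
      have step : ∀ i ∈ Ico ((j : ℕ) + 1) d, f i ≤ M * β ^ (i + 1) := by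
        intro i hi
        rw [mem_Ico] at hi
        have hid : i < d := hi.2
        have hβpow : 0 ≤ β ^ (i + 1) := le_of_lt (pow_pos hβ0 _)
        calc f i = β ^ (i + 1) * A ⟨i, hid⟩ j := by simp [hf, hid]
          _ ≤ β ^ (i + 1) * M := mul_le_mul_of_nonneg_left (hbdd _ _) hβpow
          _ = M * β ^ (i + 1) := by ring
      calc ∑ i ∈ Ico ((j : ℕ) + 1) d, f i
          ≤ ∑ i ∈ Ico ((j : ℕ) + 1) d, M * β ^ (i + 1) := sum_le_sum step
        _ = ∑ k ∈ range (d - ((j : ℕ) + 1)), M * β ^ ((j : ℕ) + 1 + k + 1) := by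
            rw [Finset.sum_Ico_eq_sum_range]
        _ = M * β ^ ((j : ℕ) + 2) * ∑ k ∈ range (d - ((j : ℕ) + 1)), β ^ k := by
            rw [mul_sum]
            exact sum_congr rfl fun k _ => by ring
        _ ≤ M * β ^ ((j : ℕ) + 2) * (1 / (1 - β)) := by
            apply mul_le_mul_of_nonneg_left (geom_aux _ (le_of_lt hβ0) hβ1 _)
            positivity
        _ = M * β / (1 - β) * β ^ ((j : ℕ) + 1) := by ring
    calc ∑ i ∈ range ((j : ℕ) + 1), f i + ∑ i ∈ Ico ((j : ℕ) + 1) d, f i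
        ≤ C / (1 - α / β) * β ^ ((j : ℕ) + 1) + M * β / (1 - β) * β ^ ((j : ℕ) + 1) :=
          add_le_add part1 part2
      _ = K * β ^ ((j : ℕ) + 1) := by rw [hK]; ring
  calc ∑ i : Fin d, β ^ ((i : ℕ) + 1) * (A *ᵥ x) i
      = ∑ j : Fin d, (∑ i : Fin d, β ^ ((i : ℕ) + 1) * A i j) * x j := by
        simp only [mulVec, dotProduct, Finset.mul_sum, Finset.sum_mul]
        rw [Finset.sum_comm]
        exact sum_congr rfl fun j _ => sum_congr rfl fun i _ => by ring
    _ ≤ ∑ j : Fin d, (K * β ^ ((j : ℕ) + 1)) * x j :=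
        sum_le_sum fun j _ => mul_le_mul_of_nonneg_right (key j) (hx j)
    _ = K * ∑ j : Fin d, β ^ ((j : ℕ) + 1) * x j := by
        rw [mul_sum]
        exact sum_congr rfl fun j _ => by ring
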